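/- Let (a,r,s):ℝ→ℝ³ be a solution of the ODE system a'=r, r'=-v r - s a/2 + a|r|/2, s'=-v s - r a. If r(ξ)>0 on an interval, then on that interval d/dξ (2r - s) = (-v + a)(2r - s). -/

import Mathlib

/-- Along solutions of the TFE traveling-wave system, wherever r>0 one has
d/dξ (2r - s) = (-v + a)(2r - s). -/
theorem stmt1 (v : ℝ) (a r s : ℝ → ℝ) (I : Set ℝ)
    (ha : ∀ ξ, HasDerivAt a (r ξ) ξ)
    (hr : ∀ ξ, HasDerivAt r (-v * r ξ - s ξ * a ξ / 2 + a ξ * |r ξ| / 2) ξ)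
    (hs : ∀ ξ, HasDerivAt s (-v * s ξ - r ξ * a ξ) ξ)
    (hI : ∀ ξ ∈ I, 0 < r ξ) :
    ∀ ξ ∈ I, HasDerivAt (fun ξ => 2 * r ξ - s ξ) ((-v + a ξ) * (2 * r ξ - s ξ)) ξ := by
  intro ξ hξ
  have habs : |r ξ| = r ξ := abs_of_pos (hI ξ hξ)
  have h := ((hr ξ).const_mul 2).sub (hs ξ)
  convert h using 1
  · rfl
  · rfl
  · rfl
  rw [habs]; ring
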